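/- Let d ≥ 1, let μ be a Borel probability measure on ℝ^d, and let x : [0,1]^d → ℝ^d be a Borel map such that the pushforward of the Lebesgue measure on [0,1]^d under x equals μ. Let (Ω, F, P) be a probability space carrying a measurable χ : Ω → ℝ^d with law μ and a measurable U : Ω → [0,1] that is uniformly distributed on [0,1] and independent of χ. Then there exists a measurable ξ : Ω → [0,1]^d whose law under P is the Lebesgue measure on [0,1]^d and such that x(ξ) = χ P-almost surely. -/

import Mathlib

open MeasureTheory Set Filter ProbabilityTheory
open scoped Topology ENNReal

section QuantileAux

/-- Generalized inverse (quantile) of a Stieltjes function, as a map on `[0,1]`. -/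
noncomputable def quantAux (F : StieltjesFunction ℝ) (u : Set.Icc (0:ℝ) 1) : ℝ :=
  if 0 < (u : ℝ) ∧ (u : ℝ) < 1 then sInf {y : ℝ | (u : ℝ) ≤ F y} else 0

lemma quantAux_le_iff (F : StieltjesFunction ℝ) (h0 : Tendsto F atBot (𝓝 0))
    (h1 : Tendsto F atTop (𝓝 1)) {u : ℝ} (hu0 : 0 < u) (hu1 : u < 1) (y : ℝ) :
    sInf {z : ℝ | u ≤ F z} ≤ y ↔ u ≤ F y := by
  set S : Set ℝ := {z : ℝ | u ≤ F z} with hS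
  have hne : S.Nonempty := by
    obtain ⟨z, hz⟩ := (h1.eventually (eventually_ge_nhds hu1)).exists
    exact ⟨z, hz⟩
  obtain ⟨w, hw⟩ := (h0.eventually (eventually_lt_nhds hu0)).exists
  have hbdd : BddBelow S := by
    refine ⟨w, fun s hs => ?_⟩
    by_contra hws
    push_neg at hws
    exact absurd (le_trans hs (F.mono hws.le)) (not_le.mpr hw)
  constructor
  · intro h
    have hmem : u ≤ F (sInf S) := by
      have htd : Tendsto F (𝓝[>] (sInf S)) (𝓝 (F (sInf S))) :=
        (F.right_continuous (sInf S)).mono_left (nhdsWithin_mono _ Ioi_subset_Ici_self)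
      refine ge_of_tendsto htd ?_
      filter_upwards [self_mem_nhdsWithin] with z hz
      obtain ⟨s, hsS, hsz⟩ := (csInf_lt_iff hbdd hne).mp hz
      exact le_trans hsS (F.mono hsz.le)
    exact le_trans hmem (F.mono h)
  · intro h
    exact csInf_le hbdd h

lemma measurable_quantAux {α : Type*} [MeasurableSpace α] (κ : Kernel α ℝ) [IsMarkovKernel κ] :
    Measurable (fun p : α × Set.Icc (0:ℝ) 1 => quantAux (cdf (κ p.1)) p.2) := by
  have hcdf : ∀ y : ℝ, Measurable fun a => cdf (κ a) y := by
    intro y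
    simp_rw [fun a => cdf_eq_real (κ a) y]
    exact (Kernel.measurable_coe κ measurableSet_Iic).ennreal_toReal
  apply measurable_of_Iic
  intro y
  have hset : (fun p : α × Set.Icc (0:ℝ) 1 => quantAux (cdf (κ p.1)) p.2) ⁻¹' Iic y =
      {p : α × Set.Icc (0:ℝ) 1 | (0 < (p.2 : ℝ) ∧ (p.2 : ℝ) < 1) ∧ (p.2 : ℝ) ≤ cdf (κ p.1) y}
      ∪ {p : α × Set.Icc (0:ℝ) 1 | ¬(0 < (p.2 : ℝ) ∧ (p.2 : ℝ) < 1) ∧ (0:ℝ) ≤ y} := by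
    ext p
    by_cases h : 0 < (p.2 : ℝ) ∧ (p.2 : ℝ) < 1
    · simp only [mem_preimage, mem_Iic, quantAux, if_pos h, mem_union, mem_setOf_eq, h,
        true_and, not_true_eq_false, false_and, or_false]
      exact quantAux_le_iff _ (tendsto_cdf_atBot _) (tendsto_cdf_atTop _) h.1 h.2 y
    · rw [mem_preimage, mem_Iic, quantAux, if_neg h]
      simp only [mem_union, mem_setOf_eq]
      exact ⟨fun hy => Or.inr ⟨h, hy⟩,
        fun hy => hy.elim (fun h' => absurd h'.1 h) And.right⟩
  rw [hset]
  have hm2 : Measurable fun p : α × Set.Icc (0:ℝ) 1 => ((p.2 : ℝ)) :=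
    measurable_subtype_coe.comp measurable_snd
  have hA : MeasurableSet {p : α × Set.Icc (0:ℝ) 1 | 0 < (p.2 : ℝ) ∧ (p.2 : ℝ) < 1} :=
    (measurableSet_lt measurable_const hm2).inter (measurableSet_lt hm2 measurable_const)
  refine MeasurableSet.union ?_ ?_
  · exact hA.inter (measurableSet_le hm2 ((hcdf y).comp measurable_fst))
  · by_cases hy : (0:ℝ) ≤ y
    · have : {p : α × Set.Icc (0:ℝ) 1 | ¬(0 < (p.2 : ℝ) ∧ (p.2 : ℝ) < 1) ∧ (0:ℝ) ≤ y}
          = {p : α × Set.Icc (0:ℝ) 1 | 0 < (p.2 : ℝ) ∧ (p.2 : ℝ) < 1}ᶜ := by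
        ext p; simp [hy]
      rw [this]; exact hA.compl
    · have : {p : α × Set.Icc (0:ℝ) 1 | ¬(0 < (p.2 : ℝ) ∧ (p.2 : ℝ) < 1) ∧ (0:ℝ) ≤ y}
          = (∅ : Set (α × Set.Icc (0:ℝ) 1)) := by
        ext p; simp [hy]
      rw [this]; exact MeasurableSet.empty

lemma map_quantAux (ν : Measure ℝ) [IsProbabilityMeasure ν]
    (hm : Measurable (quantAux (cdf ν))) :
    Measure.map (quantAux (cdf ν)) (volume : Measure (Set.Icc (0:ℝ) 1)) = ν := by
  haveI : IsProbabilityMeasure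
      (Measure.map (quantAux (cdf ν)) (volume : Measure (Set.Icc (0:ℝ) 1))) :=
    Measure.isProbabilityMeasure_map hm.aemeasurable
  refine Measure.ext_of_Iic _ _ (fun y => ?_)
  rw [Measure.map_apply hm measurableSet_Iic, ← ofReal_cdf ν y]
  set c : ℝ := cdf ν y with hc
  have hc0 : 0 ≤ c := cdf_nonneg ν y
  have hc1 : c ≤ 1 := cdf_le_one ν y
  set T : Set (Set.Icc (0:ℝ) 1) := quantAux (cdf ν) ⁻¹' Iic y with hT
  have key : ∀ u : Set.Icc (0:ℝ) 1, 0 < (u:ℝ) → (u:ℝ) < 1 →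
      (u ∈ T ↔ (u : ℝ) ≤ c) := by
    intro u h0 h1
    simp only [hT, mem_preimage, mem_Iic, quantAux, if_pos (And.intro h0 h1)]
    exact quantAux_le_iff _ (tendsto_cdf_atBot _) (tendsto_cdf_atTop _) h0 h1 y
  have himage : volume T = volume (Subtype.val '' T) :=
    (volume_image_subtype_coe measurableSet_Icc T).symm
  have hsub1 : Ioo (0:ℝ) 1 ∩ Iic c ⊆ Subtype.val '' T := by
    rintro v ⟨⟨hv0, hv1⟩, hvc⟩
    refine ⟨⟨v, ⟨hv0.le, hv1.le⟩⟩, ?_, rfl⟩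
    exact (key _ hv0 hv1).mpr hvc
  have hsub2 : Subtype.val '' T ⊆ (Ioo (0:ℝ) 1 ∩ Iic c) ∪ ({0, 1} : Set ℝ) := by
    rintro v ⟨u, huT, rfl⟩
    by_cases h : 0 < (u:ℝ) ∧ (u:ℝ) < 1
    · exact Or.inl ⟨⟨h.1, h.2⟩, (key _ h.1 h.2).mp huT⟩
    · right
      rcases u.2 with ⟨h0, h1⟩
      rcases lt_or_eq_of_le h0 with h0' | h0'
      · rcases lt_or_eq_of_le h1 with h1' | h1'
        · exact absurd ⟨h0', h1'⟩ h
        · exact Or.inr h1'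
      · exact Or.inl h0'.symm
  have hnull : volume ({0, 1} : Set ℝ) = 0 :=
    (((Set.finite_singleton (1:ℝ)).insert 0).countable).measure_zero _
  have hioo : volume (Ioo (0:ℝ) 1 ∩ Iic c) = ENNReal.ofReal c := by
    refine le_antisymm ?_ ?_
    · calc volume (Ioo (0:ℝ) 1 ∩ Iic c) ≤ volume (Icc (0:ℝ) c) := by
            refine measure_mono (fun v ⟨⟨h0, _⟩, hvc⟩ => ⟨h0.le, hvc⟩)
        _ = ENNReal.ofReal c := by rw [Real.volume_Icc, sub_zero]
    · calc ENNReal.ofReal c = volume (Ioo (0:ℝ) c) := by rw [Real.volume_Ioo, sub_zero]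
        _ ≤ volume (Ioo (0:ℝ) 1 ∩ Iic c) := by
            refine measure_mono (fun v ⟨h0, hvc⟩ => ⟨⟨h0, lt_of_lt_of_le hvc hc1⟩, hvc.le⟩)
  rw [himage]
  refine le_antisymm ?_ ?_
  · calc volume (Subtype.val '' T) ≤ volume ((Ioo (0:ℝ) 1 ∩ Iic c) ∪ ({0, 1} : Set ℝ)) :=
          measure_mono hsub2
      _ ≤ volume (Ioo (0:ℝ) 1 ∩ Iic c) + volume ({0, 1} : Set ℝ) := measure_union_le _ _
      _ = ENNReal.ofReal c := by rw [hnull, add_zero, hioo]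
  · rw [← hioo]; exact measure_mono hsub1

lemma measurable_quantAux_fixed (ν : Measure ℝ) :
    Measurable (quantAux (cdf ν)) := by
  apply measurable_of_Iic
  intro y
  have hset : quantAux (cdf ν) ⁻¹' Iic y =
      {u : Set.Icc (0:ℝ) 1 | (0 < (u : ℝ) ∧ (u : ℝ) < 1) ∧ (u : ℝ) ≤ cdf ν y}
      ∪ {u : Set.Icc (0:ℝ) 1 | ¬(0 < (u : ℝ) ∧ (u : ℝ) < 1) ∧ (0:ℝ) ≤ y} := by
    ext u
    by_cases h : 0 < (u : ℝ) ∧ (u : ℝ) < 1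
    · simp only [mem_preimage, mem_Iic, quantAux, if_pos h, mem_union, mem_setOf_eq, h,
        true_and, not_true_eq_false, false_and, or_false]
      exact quantAux_le_iff _ (tendsto_cdf_atBot _) (tendsto_cdf_atTop _) h.1 h.2 y
    · rw [mem_preimage, mem_Iic, quantAux, if_neg h]
      simp only [mem_union, mem_setOf_eq]
      exact ⟨fun hy => Or.inr ⟨h, hy⟩,
        fun hy => hy.elim (fun h' => absurd h'.1 h) And.right⟩
  rw [hset]
  have hm2 : Measurable fun u : Set.Icc (0:ℝ) 1 => ((u : ℝ)) := measurable_subtype_coe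
  have hA : MeasurableSet {u : Set.Icc (0:ℝ) 1 | 0 < (u : ℝ) ∧ (u : ℝ) < 1} :=
    (measurableSet_lt measurable_const hm2).inter (measurableSet_lt hm2 measurable_const)
  refine MeasurableSet.union ?_ ?_
  · exact hA.inter (measurableSet_le hm2 measurable_const)
  · by_cases hy : (0:ℝ) ≤ y
    · have : {u : Set.Icc (0:ℝ) 1 | ¬(0 < (u : ℝ) ∧ (u : ℝ) < 1) ∧ (0:ℝ) ≤ y}
          = {u : Set.Icc (0:ℝ) 1 | 0 < (u : ℝ) ∧ (u : ℝ) < 1}ᶜ := by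
        ext u; simp [hy]
      rw [this]; exact hA.compl
    · have : {u : Set.Icc (0:ℝ) 1 | ¬(0 < (u : ℝ) ∧ (u : ℝ) < 1) ∧ (0:ℝ) ≤ y}
          = (∅ : Set (Set.Icc (0:ℝ) 1)) := by
        ext u; simp [hy]
      rw [this]; exact MeasurableSet.empty

end QuantileAux

lemma randomization {α : Type*} [MeasurableSpace α] (ρ : Measure (α × ℝ))
    [IsProbabilityMeasure ρ] :
    ∃ G : α × Set.Icc (0:ℝ) 1 → ℝ, Measurable G ∧
      (ρ.fst.prod (volume : Measure (Set.Icc (0:ℝ) 1))).map (fun p => (p.1, G p)) = ρ := by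
  have hGmeas : Measurable (fun p : α × Set.Icc (0:ℝ) 1 => quantAux (cdf (ρ.condKernel p.1)) p.2) :=
    measurable_quantAux _
  refine ⟨fun p => quantAux (cdf (ρ.condKernel p.1)) p.2, hGmeas, ?_⟩
  have hGa : ∀ a, Measurable (fun u => quantAux (cdf (ρ.condKernel a)) u) :=
    fun a => measurable_quantAux_fixed (ρ.condKernel a)
  have hGmap : ∀ a, Measure.map (fun u => quantAux (cdf (ρ.condKernel a)) u)
      (volume : Measure (Set.Icc (0:ℝ) 1)) = ρ.condKernel a :=
    fun a => map_quantAux (ρ.condKernel a) (hGa a)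
  have hΦ : Measurable (fun p : α × Set.Icc (0:ℝ) 1 =>
      (p.1, quantAux (cdf (ρ.condKernel p.1)) p.2)) := measurable_fst.prodMk hGmeas
  have hdis : ρ.fst.compProd ρ.condKernel = ρ := ρ.disintegrate _
  refine Eq.trans ?_ hdis
  haveI : IsProbabilityMeasure ρ.fst := by
    constructor; rw [Measure.fst_univ, measure_univ]
  haveI : IsProbabilityMeasure
      ((ρ.fst.prod (volume : Measure (Set.Icc (0:ℝ) 1))).map
        (fun p => (p.1, quantAux (cdf (ρ.condKernel p.1)) p.2))) :=
    Measure.isProbabilityMeasure_map hΦ.aemeasurable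
  haveI : IsProbabilityMeasure (ρ.fst.compProd ρ.condKernel) := by rw [hdis]; infer_instance
  refine ext_of_generate_finite _ generateFrom_prod.symm isPiSystem_prod ?_ ?_
  · rintro _ ⟨s, hs, t, ht, rfl⟩
    simp only [mem_setOf_eq] at hs ht
    rw [Measure.map_apply hΦ (hs.prod ht), Measure.compProd_apply (hs.prod ht),
      Measure.prod_apply (hΦ (hs.prod ht))]
    refine lintegral_congr (fun a => ?_)
    by_cases ha : a ∈ s
    · have h2 : Prod.mk a ⁻¹' ((fun p : α × Set.Icc (0:ℝ) 1 =>
          (p.1, quantAux (cdf (ρ.condKernel p.1)) p.2)) ⁻¹' s ×ˢ t) =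
          (fun u => quantAux (cdf (ρ.condKernel a)) u) ⁻¹' t := by
        ext u; simp [ha]
      have h3 : Prod.mk a ⁻¹' (s ×ˢ t) = t := by ext r; simp [ha]
      rw [h2, h3, ← Measure.map_apply (hGa a) ht, hGmap a]
    · have h2 : Prod.mk a ⁻¹' ((fun p : α × Set.Icc (0:ℝ) 1 =>
          (p.1, quantAux (cdf (ρ.condKernel p.1)) p.2)) ⁻¹' s ×ˢ t) = ∅ := by
        ext u; simp [ha]
      have h3 : Prod.mk a ⁻¹' (s ×ˢ t) = ∅ := by ext r; simp [ha]
      rw [h2, h3]; simp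
  · simp [measure_univ]


/-- Lebesgue measure on the cube `[0,1]^d`. -/
noncomputable def cubeMeasure (d : ℕ) : Measure (Fin d → Set.Icc (0:ℝ) 1) :=
  Measure.pi fun _ => (volume : Measure (Set.Icc (0:ℝ) 1))

set_option maxHeartbeats 1000000 in
theorem stmt_12 (d : ℕ) (hd : 1 ≤ d)
    (μ : Measure (EuclideanSpace ℝ (Fin d))) [IsProbabilityMeasure μ]
    (x : (Fin d → Set.Icc (0:ℝ) 1) → EuclideanSpace ℝ (Fin d)) (hx : Measurable x)
    (hpush : (cubeMeasure d).map x = μ)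
    {Ω : Type*} [MeasurableSpace Ω] (P : Measure Ω) [IsProbabilityMeasure P]
    (χ : Ω → EuclideanSpace ℝ (Fin d)) (hχ : Measurable χ) (hχlaw : P.map χ = μ)
    (U : Ω → Set.Icc (0:ℝ) 1) (hU : Measurable U)
    (hUlaw : P.map U = (volume : Measure (Set.Icc (0:ℝ) 1)))
    (hindep : ProbabilityTheory.IndepFun U χ P) :
    ∃ ξ : Ω → (Fin d → Set.Icc (0:ℝ) 1),
      Measurable ξ ∧ P.map ξ = cubeMeasure d ∧ ∀ᵐ ω ∂P, x (ξ ω) = χ ω := by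
  classical
  haveI : IsProbabilityMeasure (cubeMeasure d) := by
    unfold cubeMeasure; infer_instance
  set e : (Fin d → Set.Icc (0:ℝ) 1) → ℝ := MeasureTheory.embeddingReal _ with he_def
  have he : MeasurableEmbedding e := MeasureTheory.measurableEmbedding_embeddingReal _
  have hpairc : Measurable fun c => (x c, e c) := hx.prodMk he.measurable
  set ρ : Measure (EuclideanSpace ℝ (Fin d) × ℝ) :=
    (cubeMeasure d).map (fun c => (x c, e c)) with hρ_def
  haveI : IsProbabilityMeasure ρ := Measure.isProbabilityMeasure_map hpairc.aemeasurable
  have hρfst : ρ.fst = μ := by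
    rw [hρ_def, Measure.fst_map_prodMk he.measurable, hpush]
  have hρsnd : ρ.snd = (cubeMeasure d).map e := by
    rw [hρ_def, Measure.snd_map_prodMk hx]
  obtain ⟨G, hGmeas, hGmap⟩ := randomization ρ
  rw [hρfst] at hGmap
  have hΦ : Measurable (fun p : EuclideanSpace ℝ (Fin d) × Set.Icc (0:ℝ) 1 => (p.1, G p)) :=
    measurable_fst.prodMk hGmeas
  have hpairm : Measurable fun ω => (χ ω, U ω) := hχ.prodMk hU
  have hpairlaw : P.map (fun ω => (χ ω, U ω)) =
      μ.prod (volume : Measure (Set.Icc (0:ℝ) 1)) := by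
    rw [← hχlaw, ← hUlaw]
    exact (indepFun_iff_map_prod_eq_prod_map_map hχ.aemeasurable hU.aemeasurable).mp hindep.symm
  set ξ₀ : Ω → ℝ := fun ω => G (χ ω, U ω) with hξ₀_def
  have hξ₀meas : Measurable ξ₀ := hGmeas.comp hpairm
  have hjoint : P.map (fun ω => (χ ω, ξ₀ ω)) = ρ := by
    rw [← hGmap, ← hpairlaw, Measure.map_map hΦ hpairm]
    rfl
  obtain ⟨inv, hinvmeas, hinv⟩ :=
    he.exists_measurable_extend measurable_id (fun _ => inferInstance)
  refine ⟨fun ω => inv (ξ₀ ω), hinvmeas.comp hξ₀meas, ?_, ?_⟩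
  · have hξ₀law : P.map ξ₀ = (cubeMeasure d).map e := by
      rw [← hρsnd, ← hjoint, Measure.snd_map_prodMk hχ]
    have h1 : P.map (fun ω => inv (ξ₀ ω)) = (P.map ξ₀).map inv :=
      (Measure.map_map hinvmeas hξ₀meas).symm
    rw [h1, hξ₀law, Measure.map_map hinvmeas he.measurable, hinv, Measure.map_id]
  · set A : Set (EuclideanSpace ℝ (Fin d) × ℝ) := {p | x (inv p.2) = p.1} with hA_def
    have hAmeas : MeasurableSet A :=
      measurableSet_eq_fun (hx.comp (hinvmeas.comp measurable_snd)) measurable_fst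
    have hρA : ρ A = 1 := by
      rw [hρ_def, Measure.map_apply hpairc hAmeas]
      have h2 : (fun c => (x c, e c)) ⁻¹' A = univ := by
        ext c
        simp only [mem_preimage, hA_def, mem_setOf_eq, mem_univ, iff_true]
        have h3 : inv (e c) = c := congrFun hinv c
        rw [h3]
      rw [h2, measure_univ]
    have hPA : P ((fun ω => (χ ω, ξ₀ ω)) ⁻¹' A) = 1 := by
      rw [← Measure.map_apply (hχ.prodMk hξ₀meas) hAmeas, hjoint, hρA]
    have hPAc : P (((fun ω => (χ ω, ξ₀ ω)) ⁻¹' A)ᶜ) = 0 := by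
      rw [measure_compl ((hχ.prodMk hξ₀meas) hAmeas) (measure_ne_top _ _), hPA, measure_univ,
        tsub_self]
    refine ae_iff.mpr (measure_mono_null (fun ω hω => ?_) hPAc)
    intro hmem
    exact hω hmem
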